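/- Fix t_0 > 0 and a finite Borel measure μ on ℝ^ℓ with compact support. If x_0 ∈ ℝ^ℓ is a maximizer of x ↦ F_{x,t_0}(μ) = (4π t_0)^{-k/2} ∫ e^{-|y-x|^2/(4t_0)} dμ(y), and μ ≠ 0, then the weighted integral ∫ (y - x_0) e^{-|y-x_0|^2/(4t_0)} dμ(y) = 0, and consequently x_0 lies in the closed convex hull of the support of μ. -/

import Mathlib

open Real MeasureTheory

open RealInnerProductSpace in
lemma aux_hasFDerivAt {E : Type*} [NormedAddCommGroup E] [InnerProductSpace ℝ E]
    (t₀ : ℝ) (ht₀ : 0 < t₀) (y x : E) :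
    HasFDerivAt (fun x : E => Real.exp (-‖y - x‖ ^ 2 / (4 * t₀)))
      ((Real.exp (-‖y - x‖ ^ 2 / (4 * t₀)) / (2 * t₀)) • (innerSL ℝ (y - x))) x := by
  have h0 : HasFDerivAt (fun x : E => y - x) (-(ContinuousLinearMap.id ℝ E)) x := by
    exact ((hasFDerivAt_const y x).sub (hasFDerivAt_id (𝕜 := ℝ) x)).congr_fderiv (by simp)
  have h1 := (h0.inner ℝ h0).const_mul (-(1 / (4 * t₀)))
  have h2 : HasFDerivAt (fun x : E => -‖y - x‖ ^ 2 / (4 * t₀))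
      ((1 / (2 * t₀)) • innerSL ℝ (y - x)) x := by
    have heq : (fun x : E => -‖y - x‖ ^ 2 / (4 * t₀)) =
        fun x : E => (-(1 / (4 * t₀))) * ⟪y - x, y - x⟫ := by
      funext z; rw [real_inner_self_eq_norm_sq]; ring
    rw [heq]
    refine h1.congr_fderiv ?_
    ext v
    simp only [ContinuousLinearMap.coe_smul', Pi.smul_apply, innerSL_apply_apply, smul_eq_mul,
      ContinuousLinearMap.coe_comp', Function.comp_apply, ContinuousLinearMap.prod_apply,
      ContinuousLinearMap.neg_apply, ContinuousLinearMap.coe_id', id_eq,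
      fderivInnerCLM_apply, inner_neg_right, inner_neg_left]
    rw [real_inner_comm v (y - x)]
    ring
  have h3 := h2.exp
  convert h3 using 1
  ext v
  simp only [ContinuousLinearMap.coe_smul', Pi.smul_apply, innerSL_apply_apply, smul_eq_mul]
  ring

/-- First variation argument of Proposition 5.3: if `x₀` maximizes
`x ↦ F_{x,t₀}(μ) = (4π t₀)^{-k/2} ∫ e^{-|y-x|²/(4t₀)} dμ(y)` for a finite nonzero compactly
supported Borel measure `μ`, then the Gaussian-weighted first moment
`∫ e^{-|y-x₀|²/(4t₀)} (y - x₀) dμ(y)` vanishes and `x₀` lies in the closed convex hull of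
the support of `μ` (i.e. in every closed convex set of full `μ`-measure). -/
theorem stmt_6 {ℓ k : ℕ} (μ : Measure (EuclideanSpace ℝ (Fin ℓ))) [IsFiniteMeasure μ]
    (hμ : μ ≠ 0) (s : Set (EuclideanSpace ℝ (Fin ℓ))) (hs : IsCompact s) (hμs : μ sᶜ = 0)
    (t₀ : ℝ) (ht₀ : 0 < t₀) (x₀ : EuclideanSpace ℝ (Fin ℓ))
    (hmax : ∀ x : EuclideanSpace ℝ (Fin ℓ),
      (4 * π * t₀) ^ (-(k : ℝ) / 2) * ∫ y, Real.exp (-‖y - x‖ ^ 2 / (4 * t₀)) ∂μ ≤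
        (4 * π * t₀) ^ (-(k : ℝ) / 2) * ∫ y, Real.exp (-‖y - x₀‖ ^ 2 / (4 * t₀)) ∂μ) :
    (∫ y, Real.exp (-‖y - x₀‖ ^ 2 / (4 * t₀)) • (y - x₀) ∂μ) = 0 ∧
      ∀ A : Set (EuclideanSpace ℝ (Fin ℓ)), Convex ℝ A → IsClosed A → μ Aᶜ = 0 →
        x₀ ∈ A := by
  have hc : (0:ℝ) < (4 * π * t₀) ^ (-(k : ℝ) / 2) :=
    Real.rpow_pos_of_pos (by positivity) _
  have hgmax : ∀ x, (∫ y, Real.exp (-‖y - x‖ ^ 2 / (4 * t₀)) ∂μ) ≤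
      ∫ y, Real.exp (-‖y - x₀‖ ^ 2 / (4 * t₀)) ∂μ :=
    fun x => le_of_mul_le_mul_left (hmax x) hc
  obtain ⟨R, hR⟩ := hs.isBounded.subset_closedBall 0
  have haes : ∀ᵐ y ∂μ, y ∈ s := by
    rw [ae_iff]; exact hμs
  set F' : EuclideanSpace ℝ (Fin ℓ) → EuclideanSpace ℝ (Fin ℓ) →
      (EuclideanSpace ℝ (Fin ℓ) →L[ℝ] ℝ) :=
    fun x y => (Real.exp (-‖y - x‖ ^ 2 / (4 * t₀)) / (2 * t₀)) • (innerSL ℝ (y - x)) with hF'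
  have hexple : ∀ (x y : EuclideanSpace ℝ (Fin ℓ)), Real.exp (-‖y - x‖ ^ 2 / (4 * t₀)) ≤ 1 := by
    intro x y
    rw [Real.exp_le_one_iff, neg_div]
    have : (0:ℝ) ≤ ‖y - x‖ ^ 2 / (4 * t₀) := by positivity
    linarith
  have hF'norm : ∀ (x y : EuclideanSpace ℝ (Fin ℓ)),
      ‖F' x y‖ ≤ (Real.exp (-‖y - x‖ ^ 2 / (4 * t₀)) / (2 * t₀)) * ‖y - x‖ := by
    intro x y
    simp only [hF']
    refine (norm_smul_le (Real.exp (-‖y - x‖ ^ 2 / (4 * t₀)) / (2 * t₀)) (innerSL ℝ (y - x))).trans_eq ?_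
    rw [innerSL_apply_norm, Real.norm_eq_abs, abs_of_pos (by positivity)]
  have hF'bound : ∀ᵐ y ∂μ, ∀ x ∈ Metric.ball x₀ 1,
      ‖F' x y‖ ≤ (R + (‖x₀‖ + 1)) / (2 * t₀) := by
    filter_upwards [haes] with y hy
    intro x hx
    refine (hF'norm x y).trans ?_
    have hyR : ‖y‖ ≤ R := by simpa using hR hy
    have hxb : ‖x‖ ≤ ‖x₀‖ + 1 := by
      have := mem_ball_iff_norm.mp hx
      have h2 : ‖x‖ - ‖x₀‖ ≤ ‖x - x₀‖ := norm_sub_norm_le _ _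
      linarith
    have hyx : ‖y - x‖ ≤ R + (‖x₀‖ + 1) :=
      (norm_sub_le _ _).trans (add_le_add hyR hxb)
    calc (Real.exp (-‖y - x‖ ^ 2 / (4 * t₀)) / (2 * t₀)) * ‖y - x‖
        ≤ (1 / (2 * t₀)) * (R + (‖x₀‖ + 1)) := by
          have h2t : (0:ℝ) < 2 * t₀ := by positivity
          exact mul_le_mul ((div_le_div_iff_of_pos_right h2t).mpr (hexple x y)) hyx
            (norm_nonneg _) (by positivity)
      _ = (R + (‖x₀‖ + 1)) / (2 * t₀) := by ring
  -- continuity facts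
  have hFcont : ∀ x : EuclideanSpace ℝ (Fin ℓ),
      Continuous fun y : EuclideanSpace ℝ (Fin ℓ) => Real.exp (-‖y - x‖ ^ 2 / (4 * t₀)) := by
    intro x; fun_prop
  have hF'cont : Continuous (F' x₀) := by
    apply Continuous.fun_smul
    · fun_prop
    · exact (innerSL ℝ).continuous.comp (continuous_id.sub continuous_const)
  have hF'meas : AEStronglyMeasurable (F' x₀) μ := hF'cont.aestronglyMeasurable
  have hF'int : Integrable (F' x₀) μ := by
    apply (integrable_const ((R + (‖x₀‖ + 1)) / (2 * t₀))).mono' hF'meas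
    filter_upwards [hF'bound] with y hy
    exact hy x₀ (Metric.mem_ball_self one_pos)
  have hFint : ∀ x : EuclideanSpace ℝ (Fin ℓ),
      Integrable (fun y => Real.exp (-‖y - x‖ ^ 2 / (4 * t₀))) μ := by
    intro x
    apply (integrable_const (1:ℝ)).mono' (hFcont x).aestronglyMeasurable
    filter_upwards with y
    rw [Real.norm_eq_abs, abs_of_pos (Real.exp_pos _)]
    exact hexple x y
  -- differentiation under integral
  have hderiv : HasFDerivAt (fun x => ∫ y, Real.exp (-‖y - x‖ ^ 2 / (4 * t₀)) ∂μ)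
      (∫ y, F' x₀ y ∂μ) x₀ := by
    apply hasFDerivAt_integral_of_dominated_of_fderiv_le
      (bound := fun _ => (R + (‖x₀‖ + 1)) / (2 * t₀)) (Metric.ball_mem_nhds x₀ one_pos)
    · filter_upwards with x
      exact (hFcont x).aestronglyMeasurable
    · exact hFint x₀
    · exact hF'meas
    · exact hF'bound
    · exact integrable_const _
    · filter_upwards with y
      intro x _
      exact aux_hasFDerivAt t₀ ht₀ y x
  have hlm : IsLocalMax (fun x => ∫ y, Real.exp (-‖y - x‖ ^ 2 / (4 * t₀)) ∂μ) x₀ :=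
    Filter.Eventually.of_forall hgmax
  have hzero : (∫ y, F' x₀ y ∂μ) = 0 := hlm.hasFDerivAt_eq_zero hderiv
  -- integrability of the vector-valued integrand
  have hGcont : Continuous fun y : EuclideanSpace ℝ (Fin ℓ) =>
      Real.exp (-‖y - x₀‖ ^ 2 / (4 * t₀)) • (y - x₀) := by fun_prop
  have hGint : Integrable (fun y => Real.exp (-‖y - x₀‖ ^ 2 / (4 * t₀)) • (y - x₀)) μ := by
    apply (integrable_const (R + ‖x₀‖)).mono' hGcont.aestronglyMeasurable
    filter_upwards [haes] with y hy
    rw [norm_smul, Real.norm_eq_abs, abs_of_pos (Real.exp_pos _)]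
    have hyR : ‖y‖ ≤ R := by simpa using hR hy
    have h1 : ‖y - x₀‖ ≤ R + ‖x₀‖ := (norm_sub_le _ _).trans (by gcongr)
    calc Real.exp (-‖y - x₀‖ ^ 2 / (4 * t₀)) * ‖y - x₀‖ ≤ 1 * (R + ‖x₀‖) := by
          apply mul_le_mul (hexple x₀ y) h1 (norm_nonneg _) zero_le_one
      _ = R + ‖x₀‖ := one_mul _
  -- first moment vanishes
  have h1 : (∫ y, Real.exp (-‖y - x₀‖ ^ 2 / (4 * t₀)) • (y - x₀) ∂μ) = 0 := by
    set I := ∫ y, Real.exp (-‖y - x₀‖ ^ 2 / (4 * t₀)) • (y - x₀) ∂μ with hI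
    have key : ∀ v : EuclideanSpace ℝ (Fin ℓ), (inner ℝ v I : ℝ) = 0 := by
      intro v
      have happ : (∫ y, F' x₀ y ∂μ) v = ∫ y, F' x₀ y v ∂μ :=
        ContinuousLinearMap.integral_apply hF'int v
      have e1 : (∫ y, F' x₀ y v ∂μ) = 0 := by rw [← happ, hzero, ContinuousLinearMap.zero_apply]
      have e2 : (inner ℝ v I : ℝ) = ∫ y, (inner ℝ v (Real.exp (-‖y - x₀‖ ^ 2 / (4 * t₀)) • (y - x₀)) : ℝ) ∂μ :=
        (integral_inner hGint v).symm
      rw [e2]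
      have e3 : (fun y => (inner ℝ v (Real.exp (-‖y - x₀‖ ^ 2 / (4 * t₀)) • (y - x₀)) : ℝ)) =
          fun y => (2 * t₀) * (F' x₀ y v) := by
        funext y
        simp only [hF', ContinuousLinearMap.coe_smul', Pi.smul_apply, innerSL_apply_apply,
          smul_eq_mul, real_inner_smul_right]
        rw [real_inner_comm v (y - x₀)]
        field_simp
      rw [e3, integral_const_mul, e1, mul_zero]
    have := key I
    rwa [inner_self_eq_zero] at this
  refine ⟨h1, ?_⟩
  intro A hA hAc hμA
  by_contra hx
  obtain ⟨f, u, hfu, hub⟩ := geometric_hahn_banach_point_closed hA hAc hx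
  have haeA : ∀ᵐ y ∂μ, y ∈ A := by
    rw [ae_iff]; exact hμA
  set φ : EuclideanSpace ℝ (Fin ℓ) → ℝ :=
    fun y => f (Real.exp (-‖y - x₀‖ ^ 2 / (4 * t₀)) • (y - x₀)) with hφ
  have hφint : Integrable φ μ := f.integrable_comp hGint
  have hφzero : (∫ y, φ y ∂μ) = 0 := by
    simp only [hφ]
    rw [ContinuousLinearMap.integral_comp_comm f hGint, h1, map_zero]
  have hφpos : ∀ᵐ y ∂μ, 0 < φ y := by
    filter_upwards [haeA] with y hy
    simp only [hφ, _root_.map_smul, map_sub, smul_eq_mul]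
    have : u < f y := hub y hy
    have h2 : 0 < f y - f x₀ := by linarith
    exact mul_pos (Real.exp_pos _) h2
  have hφnn : 0 ≤ᵐ[μ] φ := hφpos.mono fun y hy => hy.le
  have hφeq0 : φ =ᵐ[μ] 0 := (integral_eq_zero_iff_of_nonneg_ae hφnn hφint).mp hφzero
  have hfalse : ∀ᵐ (y : EuclideanSpace ℝ (Fin ℓ)) ∂μ, False := by
    filter_upwards [hφpos, hφeq0] with y h1 h2
    rw [h2] at h1
    exact lt_irrefl 0 h1
  rw [ae_iff] at hfalse
  simp only [not_false_iff, Set.setOf_true] at hfalse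
  exact hμ (Measure.measure_univ_eq_zero.mp hfalse)
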